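/- Let κ be a regular cardinal, let M and N be categories admitting κ-filtered colimits, and let (F_i : M → N)_{i ∈ I} be a set-indexed collection of functors preserving κ-filtered colimits. Let B ⊆ M be a full subcategory which is κ-preaccessible in M, and suppose that for every X ∈ B and every i ∈ I the object F_i(X) is presentable in N. Then there are arbitrarily large regular cardinals λ such that for every object X of B that is λ-presentable in M, F_i(X) is λ-presentable in N for every i ∈ I. -/

import Mathlib

universe w v u v₁ u₁ v₂ u₂

open CategoryTheory Limits Opposite

namespace Paper

variable {M : Type u} [Category.{v} M]

/-! ### Lifting properties, weak factorization systems -/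

/-- The class of morphisms with the right lifting property against a set of arrows. -/
def rlpSet (X : Set (Arrow M)) : MorphismProperty M :=
  fun _ _ f => ∀ a ∈ X, HasLiftingProperty a.hom f

/-- The right lifting property class of a class of morphisms. -/
def rlpC (L : MorphismProperty M) : MorphismProperty M :=
  fun _ _ f => ∀ ⦃A B : M⦄ (g : A ⟶ B), L g → HasLiftingProperty g f

/-- The left lifting property class of a class of morphisms. -/
def llpC (R : MorphismProperty M) : MorphismProperty M :=
  fun _ _ f => ∀ ⦃A B : M⦄ (g : A ⟶ B), R g → HasLiftingProperty f g

/-- A weak factorization system `(L, R)`. -/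
structure IsWFS (L R : MorphismProperty M) : Prop where
  rlp_eq : rlpC L = R
  llp_eq : llpC R = L
  factorization : ∀ ⦃A B : M⦄ (f : A ⟶ B),
    ∃ (Z : M) (i : A ⟶ Z) (p : Z ⟶ B), L i ∧ R p ∧ i ≫ p = f

/-! ### Posets, smooth and good diagrams -/

/-- `a` is the predecessor of `b`; equivalently `b` is isolated with predecessor `a`. -/
def IsSuccOf {P : Type w} [PartialOrder P] (a b : P) : Prop :=
  a < b ∧ ∀ c : P, c < b → c ≤ a

/-- A limit element of a good poset: not the least element and not isolated. -/
def IsLimitElem {P : Type w} [PartialOrder P] [OrderBot P] (b : P) : Prop :=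
  b ≠ ⊥ ∧ ¬ ∃ a : P, IsSuccOf a b

/-- A preorder is `κ`-directed if every subset of cardinality `< κ` has an upper bound. -/
def CardDirected (κ : Cardinal.{w}) (P : Type w) [Preorder P] : Prop :=
  ∀ s : Set P, Cardinal.mk s < κ → ∃ b : P, ∀ x ∈ s, x ≤ b

/-- A category is `κ`-filtered if every diagram indexed by a category with fewer
than `κ` morphisms admits a cocone. -/
def CardFiltered (κ : Cardinal.{v}) (J : Type u₁) [Category.{v₁} J] : Prop :=
  ∀ (A : Type v) [SmallCategory A], Cardinal.mk (Arrow A) < κ →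
    ∀ F : A ⥤ J, Nonempty (Cocone F)

section Smooth

variable {P : Type w} [PartialOrder P] (D : P ⥤ M)

/-- Restriction of a diagram to the initial segment `{y | y < b}`. -/
def restrictIio (b : P) : {y : P // y < b} ⥤ M :=
  Monotone.functor (f := fun y : {y : P // y < b} => (y : P)) (fun _ _ h => h) ⋙ D

/-- The canonical cocone on the restriction of `D` to `{y | y < b}` with point `D.obj b`. -/
def iioCocone (b : P) : Cocone (restrictIio D b) where
  pt := D.obj b
  ι :=
    { app := fun y => D.map (homOfLE y.2.le)
      naturality := fun y z f => by
        dsimp [restrictIio, Monotone.functor]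
        rw [Category.comp_id, ← D.map_comp]
        rfl }

/-- A diagram over a poset with a least element is smooth if at every limit element the
canonical cocone of the restriction to the strict initial segment is a colimit cocone. -/
def IsSmooth [OrderBot P] : Prop :=
  ∀ b : P, IsLimitElem b → Nonempty (IsColimit (iioCocone D b))

end Smooth

/-! ### Cellular morphisms and cofibrations -/

/-- `Q` contains the set of arrows `X`. -/
def ContainsX (X : Set (Arrow M)) (Q : MorphismProperty M) : Prop :=
  ∀ a ∈ X, Q a.hom

/-- `Q` is stable under pushouts of morphisms in `X` along arbitrary morphisms. -/
def StableUnderPushoutsOf (X : Set (Arrow M)) (Q : MorphismProperty M) : Prop :=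
  ∀ ⦃A B A' B' : M⦄ (u : A ⟶ A') (f : A ⟶ B) (g : A' ⟶ B') (v : B ⟶ B'),
    Arrow.mk f ∈ X → IsPushout u f g v → Q g

/-- `Q` is stable under transfinite compositions: for every smooth diagram over a
well-ordered set with least element, all of whose links lie in `Q`, the composite
(the component at `⊥` of any colimit cocone) lies in `Q`. -/
def StableUnderTransfiniteComposition (Q : MorphismProperty M) : Prop :=
  ∀ (β : Type v) [LinearOrder β] [OrderBot β], WellFoundedLT β →
    ∀ (D : β ⥤ M), IsSmooth D →
      (∀ (a b : β) (h : IsSuccOf a b), Q (D.map (homOfLE h.1.le))) →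
      ∀ (c : Cocone D), IsColimit c → Q (c.ι.app ⊥)

/-- `Q` is stable under retracts (in the arrow category). -/
def IsRetractOf {A B A' B' : M} (f : A ⟶ B) (g : A' ⟶ B') : Prop :=
  ∃ (iA : A ⟶ A') (rA : A' ⟶ A) (iB : B ⟶ B') (rB : B' ⟶ B),
    iA ≫ rA = 𝟙 A ∧ iB ≫ rB = 𝟙 B ∧ iA ≫ g = f ≫ iB ∧ rA ≫ f = g ≫ rB

def StableUnderRetracts (Q : MorphismProperty M) : Prop :=
  ∀ ⦃A B A' B' : M⦄ (f : A ⟶ B) (g : A' ⟶ B'), IsRetractOf f g → Q g → Q f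

/-- `Q` contains `X` and is closed under pushouts along `X` and transfinite compositions. -/
def IsCellClosed (X : Set (Arrow M)) (Q : MorphismProperty M) : Prop :=
  ContainsX X Q ∧ StableUnderPushoutsOf X Q ∧ StableUnderTransfiniteComposition Q

/-- The class of `X`-cellular morphisms: the smallest class containing `X` closed under
pushouts along morphisms of `X` and transfinite compositions. -/
def cellP (X : Set (Arrow M)) : MorphismProperty M :=
  fun _ _ f => ∀ Q : MorphismProperty M, IsCellClosed X Q → Q f

/-- The class of `X`-cofibrations: the smallest class containing `X` closed under
pushouts along morphisms of `X`, transfinite compositions and retracts. -/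
def cofP (X : Set (Arrow M)) : MorphismProperty M :=
  fun _ _ f => ∀ Q : MorphismProperty M, IsCellClosed X Q → StableUnderRetracts Q → Q f

/-! ### Smallness and presentability -/

/-- `Hom(A, -)` maps the colimit cocone `c` to a colimit cocone in types. -/
def CoyonedaPreserves (A : M) {J : Type u₁} [Category.{v₁} J] (D : J ⥤ M) (c : Cocone D) :
    Prop :=
  Nonempty (IsColimit ((coyoneda.obj (op A)).mapCocone c))

/-- `A` is `κ`-small relative to `X`: `Hom(A, -)` preserves colimits of smooth κ-directed
well-ordered chains whose links are `X`-cellular. -/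
def SmallRel (κ : Cardinal.{v}) (X : Set (Arrow M)) (A : M) : Prop :=
  ∀ (P : Type v) [LinearOrder P] [OrderBot P], WellFoundedLT P → CardDirected κ P →
    ∀ (D : P ⥤ M), IsSmooth D →
      (∀ (a b : P) (h : IsSuccOf a b), cellP X (D.map (homOfLE h.1.le))) →
      ∀ (c : Cocone D), IsColimit c → CoyonedaPreserves A D c

/-- `A` is strictly `κ`-small relative to `X`: `Hom(A, -)` preserves colimits of κ-directed
good (smooth, well-founded with bottom) diagrams whose links are `X`-cellular. -/
def StrictlySmallRel (κ : Cardinal.{v}) (X : Set (Arrow M)) (A : M) : Prop :=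
  ∀ (P : Type v) [PartialOrder P] [OrderBot P], WellFoundedLT P → CardDirected κ P →
    ∀ (D : P ⥤ M), IsSmooth D →
      (∀ (a b : P) (h : IsSuccOf a b), cellP X (D.map (homOfLE h.1.le))) →
      ∀ (c : Cocone D), IsColimit c → CoyonedaPreserves A D c

/-- `A` is `κ`-presentable: `Hom(A, -)` preserves `κ`-filtered colimits. -/
def IsCardinalPresentable (κ : Cardinal.{v}) (A : M) : Prop :=
  ∀ (J : Type v) [SmallCategory J], CardFiltered κ J →
    ∀ (D : J ⥤ M) (c : Cocone D), IsColimit c → CoyonedaPreserves A D c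

/-- `A` is presentable: `κ`-presentable for some regular cardinal `κ`. -/
def IsPresentableObj (A : M) : Prop :=
  ∃ κ : Cardinal.{v}, κ.IsRegular ∧ IsCardinalPresentable κ A

/-! ### Notions of cofibrant generation -/

/-- `X` is a (small) generating set: `X ⊆ L` and `X^□ = R`. -/
structure IsGeneratingSet (L R : MorphismProperty M) (X : Set (Arrow M)) : Prop where
  small : Small.{v} X
  subset : ∀ a ∈ X, L a.hom
  rlp : rlpSet X = R

def SetwiseCofGen (L R : MorphismProperty M) : Prop :=
  ∃ X : Set (Arrow M), IsGeneratingSet L R X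

def WeaklyCofGenBy (L R : MorphismProperty M) (X : Set (Arrow M)) : Prop :=
  IsGeneratingSet L R X ∧ cofP X = L

def CofGenBy (L R : MorphismProperty M) (X : Set (Arrow M)) (κ : Cardinal.{v}) : Prop :=
  IsGeneratingSet L R X ∧ ∀ a ∈ X, SmallRel κ X a.left

def StrictlyCofGenBy (L R : MorphismProperty M) (X : Set (Arrow M)) (κ : Cardinal.{v}) : Prop :=
  IsGeneratingSet L R X ∧ ∀ a ∈ X, StrictlySmallRel κ X a.left

def SemiPerfectlyCofGenBy (L R : MorphismProperty M) (X : Set (Arrow M)) (κ : Cardinal.{v}) :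
    Prop :=
  IsGeneratingSet L R X ∧ ∀ a ∈ X, IsCardinalPresentable κ a.left

def PerfectlyCofGenBy (L R : MorphismProperty M) (X : Set (Arrow M)) (κ : Cardinal.{v}) : Prop :=
  SemiPerfectlyCofGenBy L R X κ ∧ ∀ a ∈ X, IsCardinalPresentable κ a.right

def CofGen (L R : MorphismProperty M) : Prop :=
  ∃ (X : Set (Arrow M)) (κ : Cardinal.{v}), κ.IsRegular ∧ CofGenBy L R X κ

def StrictlyCofGen (L R : MorphismProperty M) : Prop :=
  ∃ (X : Set (Arrow M)) (κ : Cardinal.{v}), κ.IsRegular ∧ StrictlyCofGenBy L R X κ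

def SemiPerfectlyCofGen (L R : MorphismProperty M) : Prop :=
  ∃ (X : Set (Arrow M)) (κ : Cardinal.{v}), κ.IsRegular ∧ SemiPerfectlyCofGenBy L R X κ

def PerfectlyCofGen (L R : MorphismProperty M) : Prop :=
  ∃ (X : Set (Arrow M)) (κ : Cardinal.{v}), κ.IsRegular ∧ PerfectlyCofGenBy L R X κ

/-! ### Cofibrant objects -/

/-- `A` is `L`-cofibrant: the morphism from an initial object to `A` lies in `L`. -/
def CofibrantObj (L : MorphismProperty M) (A : M) : Prop :=
  ∀ ⦃I : M⦄ (hI : IsInitial I), L (hI.to A)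

/-- `A` is `R`-fibrant: the morphism from `A` to a terminal object lies in `R`. -/
def FibrantObj (R : MorphismProperty M) (A : M) : Prop :=
  ∀ ⦃T : M⦄ (hT : IsTerminal T), R (hT.from A)

/-- A set of objects closed under `λ`-small colimits (diagrams with fewer than `λ` morphisms). -/
def ClosedUnderColimitsCard (lam : Cardinal.{v}) (S : Set M) : Prop :=
  ∀ (J : Type v) [SmallCategory J], Cardinal.mk (Arrow J) < lam →
    ∀ (D : J ⥤ M) (c : Cocone D), IsColimit c → (∀ j, D.obj j ∈ S) → c.pt ∈ S

/-- The smallest class of objects containing the domains and codomains of `X` and closed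
under `λ`-small colimits in `M`. -/
def Atilde (X : Set (Arrow M)) (lam : Cardinal.{v}) : Set M :=
  { m | ∀ S : Set M, (∀ a ∈ X, a.left ∈ S ∧ a.right ∈ S) →
      ClosedUnderColimitsCard lam S → m ∈ S }

/-- `A(X, λ)`: the intersection of `Atilde X λ` with the cofibrant objects. -/
def Aset (L : MorphismProperty M) (X : Set (Arrow M)) (lam : Cardinal.{v}) : Set M :=
  { m | m ∈ Atilde X lam ∧ CofibrantObj L m }

/-- A set of objects is essentially small. -/
def EssentiallySmallSet (S : Set M) : Prop :=
  ∃ T : Set M, Small.{v} T ∧ T ⊆ S ∧ ∀ m ∈ S, ∃ t ∈ T, Nonempty (m ≅ t)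

/-- `A` is a `λ`-filtered colimit (in `M`) of objects from `S`. -/
def IsCardFilteredColimitOf (lam : Cardinal.{v}) (S : Set M) (A : M) : Prop :=
  ∃ J : Cat.{v, v}, CardFiltered lam J ∧
    ∃ D : J ⥤ M, (∀ j, D.obj j ∈ S) ∧ ∃ c : Cocone D, Nonempty (IsColimit c) ∧ c.pt = A

/-! ### Preaccessible and locally presentable categories -/

def PreaccessibleAt (lam : Cardinal.{v}) (C : Type u₁) [Category.{v} C] : Prop :=
  ∃ A : Set C, Small.{v} A ∧ (∀ a ∈ A, IsCardinalPresentable lam a) ∧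
    ∀ X : C, IsCardFilteredColimitOf lam A X

def Preaccessible (C : Type u₁) [Category.{v} C] : Prop :=
  ∃ lam : Cardinal.{v}, lam.IsRegular ∧ PreaccessibleAt lam C

def LocallyPresentable (C : Type u₁) [Category.{v} C] : Prop :=
  HasColimitsOfSize.{v, v} C ∧ Preaccessible C

/-! ### Vopěnka's principle -/

/-- A graph: a type with a binary relation. -/
structure Graph : Type (v + 1) where
  V : Type v
  E : V → V → Prop

/-- A homomorphism of graphs. -/
structure GraphHom (G H : Graph.{v}) : Type v where
  toFun : G.V → H.V
  map : ∀ {a b : G.V}, G.E a b → H.E (toFun a) (toFun b)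

/-- Vopěnka's principle: for every ordinal-indexed family of graphs there exist two distinct
indices and a homomorphism between the corresponding graphs; equivalently, the category of
graphs has no large discrete full subcategory. -/
def VopenkaPrinciple : Prop :=
  ∀ G : Ordinal.{v} → Graph.{v}, ∃ i j : Ordinal.{v}, i ≠ j ∧ Nonempty (GraphHom (G i) (G j))


/-- `C` admits `κ`-filtered colimits. -/
def HasCardFilteredColimits (κ : Cardinal.{v}) (C : Type u₁) [Category.{v} C] : Prop :=
  ∀ (J : Type v) [SmallCategory J], CardFiltered κ J → HasColimitsOfShape J C

/-- `F` preserves `κ`-filtered colimits. -/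
def PreservesCardFilteredColimits (κ : Cardinal.{v}) {C : Type u₁} [Category.{v} C]
    {D : Type u₂} [Category.{v} D] (F : C ⥤ D) : Prop :=
  ∀ (J : Type v) [SmallCategory J], CardFiltered κ J →
    ∀ (E : J ⥤ C) (c : Cocone E), IsColimit c → Nonempty (IsColimit (F.mapCocone c))

/-- A full subcategory `B ⊆ M` is `κ`-preaccessible in `M`: there is a small set `A ⊆ B` of
`κ`-presentable objects of `M` such that every object of `B` is a `κ`-filtered colimit in
`M` of objects of `A`. -/
def PreaccessibleIn (κ : Cardinal.{v}) {M : Type u} [Category.{v} M] (B : Set M) : Prop :=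
  ∃ A : Set M, Small.{v} A ∧ A ⊆ B ∧ (∀ a ∈ A, IsCardinalPresentable κ a) ∧
    ∀ X ∈ B, IsCardFilteredColimitOf κ A X

namespace St10


open Cardinal

/-! ### Counting helpers -/

def arrowEquivSigma (C : Type u₁) [Category.{v₁} C] : Arrow C ≃ Σ (X : C) (Y : C), X ⟶ Y where
  toFun f := ⟨f.left, f.right, f.hom⟩
  invFun t := Arrow.mk t.2.2
  left_inv f := rfl
  right_inv t := rfl

lemma mk_arrow_le (C : Type v) [SmallCategory C] (b : Cardinal.{v})
    (hb : ∀ X Y : C, #(X ⟶ Y) ≤ b) : #(Arrow C) ≤ #C * #C * b := by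
  rw [Cardinal.mk_congr (arrowEquivSigma C)]
  calc #(Σ (X : C) (Y : C), X ⟶ Y) = Cardinal.sum (fun X : C => #(Σ Y : C, X ⟶ Y)) :=
        Cardinal.mk_sigma _
    _ ≤ Cardinal.sum (fun _ : C => #C * b) := by
        refine Cardinal.sum_le_sum _ _ (fun X => ?_)
        calc #(Σ Y : C, X ⟶ Y) = Cardinal.sum (fun Y : C => #(X ⟶ Y)) := Cardinal.mk_sigma _
          _ ≤ Cardinal.sum (fun _ : C => b) := Cardinal.sum_le_sum _ _ (fun Y => hb X Y)
          _ = #C * b := Cardinal.sum_const' _ _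
    _ = #C * (#C * b) := Cardinal.sum_const' _ _
    _ = #C * #C * b := (mul_assoc _ _ _).symm

lemma mk_obj_le_arrow (C : Type v) [SmallCategory C] : #C ≤ #(Arrow C) :=
  Cardinal.mk_le_of_injective (f := fun X : C => Arrow.mk (𝟙 X))
    (Function.LeftInverse.injective (g := fun f : Arrow C => f.left) (fun _ => rfl))

lemma mk_arrow_lt (C : Type v) [SmallCategory C] {μ : Cardinal.{v}} (hμ : ℵ₀ ≤ μ)
    (hO : #C < μ) (b : Cardinal.{v}) (hb : b < μ) (h : ∀ X Y : C, #(X ⟶ Y) ≤ b) :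
    #(Arrow C) < μ :=
  lt_of_le_of_lt (mk_arrow_le C b h)
    (Cardinal.mul_lt_of_lt hμ (Cardinal.mul_lt_of_lt hμ hO hO) hb)

lemma cardFiltered_mono {J : Type u₁} [Category.{v₁} J] {μ μ' : Cardinal.{v}} (h : μ' ≤ μ)
    (hJ : CardFiltered μ J) : CardFiltered μ' J :=
  fun A _ hA F => hJ A (lt_of_lt_of_le hA h) F

/-! ### The graph-cocone gadget -/

lemma mk_walkingMultispan_le {L R : Type v} (f g : L → R) :
    #(WalkingMultispan ⟨L, R, f, g⟩) ≤ #L + #R := by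
  have h : #(WalkingMultispan ⟨L, R, f, g⟩) ≤ #(L ⊕ R) := by
    refine Cardinal.mk_le_of_injective (f := fun X : WalkingMultispan ⟨L, R, f, g⟩ =>
      (match X with
        | .left a => Sum.inl a
        | .right b => Sum.inr b : L ⊕ R)) ?_
    intro X Y he
    cases X <;> cases Y <;> simp_all
  simpa using h

lemma mk_arrow_walkingMultispan_le {L R : Type v} (f g : L → R) :
    #(Arrow (WalkingMultispan ⟨L, R, f, g⟩)) ≤ #((WalkingMultispan ⟨L, R, f, g⟩) ⊕ (L × Bool)) := by
  rw [Cardinal.mk_congr (arrowEquivSigma _)]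
  refine Cardinal.mk_le_of_injective (f := fun t : Σ (X Y : WalkingMultispan ⟨L, R, f, g⟩), X ⟶ Y =>
    (match t with
      | ⟨_, _, .id x⟩ => Sum.inl x
      | ⟨_, _, .fst a⟩ => Sum.inr (a, true)
      | ⟨_, _, .snd a⟩ => Sum.inr (a, false) : (WalkingMultispan ⟨L, R, f, g⟩) ⊕ (L × Bool))) ?_
  rintro ⟨X1, Y1, h1⟩ ⟨X2, Y2, h2⟩ he
  change WalkingMultispan.Hom X1 Y1 at h1
  change WalkingMultispan.Hom X2 Y2 at h2
  cases h1 <;> cases h2 <;> simp_all <;> (subst he; rfl)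

lemma graph_cocone {K : Type v} [SmallCategory K] {μ : Cardinal.{v}} (hμ : ℵ₀ ≤ μ)
    (hK : CardFiltered μ K) {O W : Type v} (hO : #O < μ) (hW : #W < μ)
    (s t : W → O) (obj : O → K) (arr : ∀ w, obj (s w) ⟶ obj (t w)) :
    ∃ (v : K) (leg : ∀ o, obj o ⟶ v), ∀ w, arr w ≫ leg (t w) = leg (s w) := by
  -- stage 1 : discrete cocone
  have hOd : #(Discrete O) < μ := by
    have : #(Discrete O) = #O :=
      Cardinal.mk_congr ⟨Discrete.as, Discrete.mk, fun _ => rfl, fun _ => rfl⟩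
    rwa [this]
  have hdisc : #(Arrow (Discrete O)) < μ := by
    refine mk_arrow_lt _ hμ hOd 1 (lt_of_lt_of_le Cardinal.one_lt_aleph0 hμ) ?_
    intro X Y
    have : Subsingleton (X ⟶ Y) := inferInstance
    exact Cardinal.le_one_iff_subsingleton.mpr this
  obtain ⟨c₀⟩ := hK (Discrete O) hdisc (Discrete.functor obj)
  set m : ∀ o : O, obj o ⟶ c₀.pt := fun o => c₀.ι.app ⟨o⟩ with hm
  -- stage 2 : multispan
  let J : MultispanShape.{v, v} :=
    { L := W
      R := PUnit.{v + 1}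
      fst := fun _ => PUnit.unit
      snd := fun _ => PUnit.unit }
  let I : MultispanIndex J K :=
    { left := fun w => obj (s w)
      right := fun _ => c₀.pt
      fst := fun w => arr w ≫ m (t w)
      snd := fun w => m (s w) }
  have hms : #(Arrow (WalkingMultispan J)) < μ := by
    refine lt_of_le_of_lt (mk_arrow_walkingMultispan_le J.fst J.snd) ?_
    have h1 : #((WalkingMultispan J) ⊕ (W × Bool)) ≤ (#W + 1) + #W * 2 := by
      rw [Cardinal.mk_sum]
      simp only [Cardinal.lift_id]
      refine add_le_add ?_ ?_
      · refine le_trans (mk_walkingMultispan_le J.fst J.snd) ?_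
        simp [J]
      · simp [Cardinal.mk_prod]
    refine lt_of_le_of_lt h1 ?_
    have hone : (1 : Cardinal.{v}) < μ := lt_of_lt_of_le Cardinal.one_lt_aleph0 hμ
    have htwo : (2 : Cardinal.{v}) < μ :=
      lt_of_lt_of_le (by exact_mod_cast Cardinal.nat_lt_aleph0 2) hμ
    exact Cardinal.add_lt_of_lt hμ (Cardinal.add_lt_of_lt hμ hW hone)
      (Cardinal.mul_lt_of_lt hμ hW htwo)
  obtain ⟨c₁⟩ := hK _ hms I.multispan
  refine ⟨c₁.pt, fun o => m o ≫ c₁.ι.app (.right PUnit.unit), fun w => ?_⟩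
  have h1 := c₁.w (WalkingMultispan.Hom.fst w)
  have h2 := c₁.w (WalkingMultispan.Hom.snd w)
  rw [MultispanIndex.multispan_map_fst] at h1
  rw [MultispanIndex.multispan_map_snd] at h2
  have h1' : (arr w ≫ m (t w)) ≫ c₁.ι.app (.right PUnit.unit) = c₁.ι.app (.left w) := by
    exact h1
  have h2' : m (s w) ≫ c₁.ι.app (.right PUnit.unit) = c₁.ι.app (.left w) := by
    exact h2
  exact (Category.assoc _ _ _).symm.trans (h1'.trans h2'.symm)

lemma isFilteredOrEmpty_of_cardFiltered {K : Type v} [SmallCategory K] {μ : Cardinal.{v}}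
    (hμ : ℵ₀ ≤ μ) (hK : CardFiltered μ K) : IsFilteredOrEmpty K := by
  constructor
  · intro X Y
    obtain ⟨v, leg, -⟩ := graph_cocone hμ hK (O := ULift.{v} Bool) (W := PEmpty.{v + 1})
      (lt_of_lt_of_le (Cardinal.lt_aleph0_of_finite _) hμ)
      (lt_of_lt_of_le (Cardinal.lt_aleph0_of_finite _) hμ)
      PEmpty.elim PEmpty.elim (fun o => if o.down then X else Y) (fun w => w.elim)
    exact ⟨v, leg ⟨true⟩, leg ⟨false⟩, trivial⟩
  · intro X Y f g
    obtain ⟨v, leg, hleg⟩ := graph_cocone hμ hK (O := ULift.{v} Bool) (W := ULift.{v} Bool)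
      (lt_of_lt_of_le (Cardinal.lt_aleph0_of_finite _) hμ)
      (lt_of_lt_of_le (Cardinal.lt_aleph0_of_finite _) hμ)
      (fun _ => ⟨false⟩) (fun _ => ⟨true⟩) (fun o => if o.down then Y else X)
      (fun w => if w.down then f else g)
    have h1 := hleg ⟨true⟩
    have h2 := hleg ⟨false⟩
    simp at h1 h2
    exact ⟨v, leg ⟨true⟩, by rw [h1, h2]⟩



open Cardinal

-- from mod1 (assumed): graph_cocone, isFilteredOrEmpty_of_cardFiltered, mk_obj_le_arrow, cardFiltered_mono
lemma pres_mono {C : Type u₂} [Category.{v} C] {ρ lam : Cardinal.{v}} (h : ρ ≤ lam) {X : C}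
    (hX : IsCardinalPresentable ρ X) : IsCardinalPresentable lam X :=
  fun J _ hJ => hX J (cardFiltered_mono h hJ)

section Helpers

variable {C : Type u₂} [Category.{v} C] {K : Type v} [SmallCategory K] {E : K ⥤ C} {ec : Cocone E}

lemma coyoneda_surj {A : C} (h : IsColimit ((coyoneda.obj (op A)).mapCocone ec))
    (u : A ⟶ ec.pt) : ∃ (k : K) (va : A ⟶ E.obj k), va ≫ ec.ι.app k = u := by
  obtain ⟨k, va, hv⟩ := Types.jointly_surjective _ h u
  exact ⟨k, va, hv⟩

lemma coyoneda_inj [IsFilteredOrEmpty K] {A : C}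
    (h : IsColimit ((coyoneda.obj (op A)).mapCocone ec)) {k : K} (f g : A ⟶ E.obj k)
    (hfg : f ≫ ec.ι.app k = g ≫ ec.ι.app k) :
    ∃ (k' : K) (u₁ u₂ : k ⟶ k'), f ≫ E.map u₁ = g ≫ E.map u₂ := by
  have := (Types.FilteredColimit.isColimit_eq_iff (E ⋙ coyoneda.obj (op A)) h
    (i := k) (j := k) (xi := f) (xj := g)).mp hfg
  obtain ⟨k', u₁, u₂, he⟩ := this
  exact ⟨k', u₁, u₂, he⟩

/-- A retract of a `λ`-presentable object is `λ`-presentable. -/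
lemma pres_of_retract {lam : Cardinal.{v}} (hlam : ℵ₀ ≤ lam) {X Y : C} (s : X ⟶ Y) (r : Y ⟶ X)
    (hsr : s ≫ r = 𝟙 X) (hY : IsCardinalPresentable lam Y) : IsCardinalPresentable lam X := by
  intro K _ hK E ec hec
  haveI : IsFilteredOrEmpty K := isFilteredOrEmpty_of_cardFiltered hlam hK
  obtain ⟨hYc⟩ := hY K hK E ec hec
  constructor
  refine Types.FilteredColimit.isColimitOf _ _ ?_ ?_
  · intro x
    obtain ⟨k, ya, hy⟩ := coyoneda_surj hYc (r ≫ x)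
    refine ⟨k, s ≫ ya, ?_⟩
    change x = (s ≫ ya) ≫ ec.ι.app k
    rw [Category.assoc, hy, ← Category.assoc, hsr, Category.id_comp]
  · intro i j xi xj hij
    have hij0 : xi ≫ ec.ι.app i = xj ≫ ec.ι.app j := hij
    have hij' : (r ≫ xi) ≫ ec.ι.app i = (r ≫ xj) ≫ ec.ι.app j := by
      rw [Category.assoc, Category.assoc, hij0]
    have := (Types.FilteredColimit.isColimit_eq_iff (E ⋙ coyoneda.obj (op Y)) hYc
      (i := i) (j := j) (xi := r ≫ xi) (xj := r ≫ xj)).mp hij'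
    obtain ⟨k, u₁, u₂, he⟩ := this
    refine ⟨k, u₁, u₂, ?_⟩
    change (r ≫ xi) ≫ E.map u₁ = (r ≫ xj) ≫ E.map u₂ at he
    change xi ≫ E.map u₁ = xj ≫ E.map u₂
    calc xi ≫ E.map u₁ = (s ≫ r) ≫ xi ≫ E.map u₁ := by rw [hsr, Category.id_comp]
      _ = s ≫ (r ≫ xi) ≫ E.map u₁ := by simp
      _ = s ≫ (r ≫ xj) ≫ E.map u₂ := by rw [he]
      _ = (s ≫ r) ≫ xj ≫ E.map u₂ := by simp
      _ = xj ≫ E.map u₂ := by rw [hsr, Category.id_comp]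

/-- A `λ`-small colimit of `λ`-presentable objects is `λ`-presentable. -/
lemma pres_of_small_colimit {lam : Cardinal.{v}} (hlam : ℵ₀ ≤ lam)
    {S : Type v} [SmallCategory S] (hS : #(Arrow S) < lam)
    (G : S ⥤ C) (t : Cocone G) (ht : IsColimit t)
    (hobj : ∀ s, IsCardinalPresentable lam (G.obj s)) : IsCardinalPresentable lam t.pt := by
  have hSobj : #S < lam := lt_of_le_of_lt (mk_obj_le_arrow S) hS
  intro K _ hK E ec hec
  haveI : IsFilteredOrEmpty K := isFilteredOrEmpty_of_cardFiltered hlam hK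
  have hpre : ∀ s : S, IsColimit ((coyoneda.obj (op (G.obj s))).mapCocone ec) :=
    fun s => (hobj s K hK E ec hec).some
  constructor
  refine Types.FilteredColimit.isColimitOf _ _ ?_ ?_
  · -- surjectivity
    intro u
    change t.pt ⟶ ec.pt at u
    -- pick local factorizations
    have h1 : ∀ s : S, ∃ (k : K) (va : G.obj s ⟶ E.obj k), va ≫ ec.ι.app k = t.ι.app s ≫ u :=
      fun s => coyoneda_surj (hpre s) (t.ι.app s ≫ u)
    choose k va hva using h1
    -- common vertex for all the k s
    obtain ⟨k₀, ρ, -⟩ := graph_cocone hlam hK (O := S) (W := PEmpty.{v+1}) hSobj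
      (lt_of_lt_of_le (Cardinal.lt_aleph0_of_finite _) hlam) PEmpty.elim PEmpty.elim k
      (fun w => w.elim)
    set wv : ∀ s : S, G.obj s ⟶ E.obj k₀ := fun s => va s ≫ E.map (ρ s) with hwv
    have hw : ∀ s : S, wv s ≫ ec.ι.app k₀ = t.ι.app s ≫ u := by
      intro s
      rw [hwv]
      simp only [Category.assoc]
      rw [ec.w (ρ s)]
      exact hva s
    -- per arrow coherence
    have h2 : ∀ φ : Arrow S, ∃ (k' : K) (u₁ u₂ : k₀ ⟶ k'),
        wv φ.left ≫ E.map u₁ = (G.map φ.hom ≫ wv φ.right) ≫ E.map u₂ := by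
      intro φ
      refine coyoneda_inj (hpre φ.left) _ _ ?_
      rw [hw φ.left]
      have : (G.map φ.hom ≫ wv φ.right) ≫ ec.ι.app k₀ = G.map φ.hom ≫ t.ι.app φ.right ≫ u := by
        rw [Category.assoc, hw φ.right]
      have h3 : G.map φ.hom ≫ t.ι.app φ.right = t.ι.app φ.left := t.w φ.hom
      rw [this, ← Category.assoc, h3]
    choose kφ u₁ u₂ hu using h2
    -- combine via graph cocone
    obtain ⟨k₁, leg, hleg⟩ := graph_cocone hlam hK (O := Option (Arrow S))
      (W := (Arrow S) ⊕ (Arrow S))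
      (by
        rw [Cardinal.mk_option]
        exact Cardinal.add_lt_of_lt hlam hS (lt_of_lt_of_le Cardinal.one_lt_aleph0 hlam))
      (by
        rw [Cardinal.mk_sum]
        simpa using Cardinal.add_lt_of_lt hlam hS hS)
      (fun _ => none) (fun w => some (Sum.elim id id w))
      (fun o => Option.rec k₀ kφ o)
      (fun w => Sum.rec (fun φ => u₁ φ) (fun φ => u₂ φ) w)
    have hl1 : ∀ φ : Arrow S, u₁ φ ≫ leg (some φ) = leg none := fun φ => hleg (Sum.inl φ)
    have hl2 : ∀ φ : Arrow S, u₂ φ ≫ leg (some φ) = leg none := fun φ => hleg (Sum.inr φ)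
    -- cocone over G with point E.obj k₁
    have hnat : ∀ {a b : S} (φh : a ⟶ b),
        G.map φh ≫ (wv b ≫ E.map (leg none)) = wv a ≫ E.map (leg none) := by
      intro a b φh
      have h : wv a ≫ E.map (u₁ (Arrow.mk φh)) = (G.map φh ≫ wv b) ≫ E.map (u₂ (Arrow.mk φh)) :=
        hu (Arrow.mk φh)
      calc G.map φh ≫ wv b ≫ E.map (leg none)
          = G.map φh ≫ wv b ≫ E.map (u₂ (Arrow.mk φh) ≫ leg (some (Arrow.mk φh))) := by
            rw [hl2]
        _ = ((G.map φh ≫ wv b) ≫ E.map (u₂ (Arrow.mk φh))) ≫ E.map (leg (some (Arrow.mk φh))) := by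
            rw [E.map_comp]; simp
        _ = (wv a ≫ E.map (u₁ (Arrow.mk φh))) ≫ E.map (leg (some (Arrow.mk φh))) := by
            rw [← h]
        _ = wv a ≫ E.map (u₁ (Arrow.mk φh) ≫ leg (some (Arrow.mk φh))) := by
            rw [E.map_comp]; simp
        _ = wv a ≫ E.map (leg none) := by rw [hl1]
    set cG : Cocone G :=
      { pt := E.obj k₁
        ι :=
          { app := fun s => wv s ≫ E.map (leg none)
            naturality := fun a b φh => by
              simp only [Functor.const_obj_obj, Functor.const_obj_map, Category.comp_id]
              exact hnat φh } } with hcG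
    refine ⟨k₁, ht.desc cG, ?_⟩
    have : ht.desc cG ≫ ec.ι.app k₁ = u := by
      refine ht.hom_ext (fun s => ?_)
      rw [← Category.assoc, ht.fac cG s]
      change (wv s ≫ E.map (leg none)) ≫ ec.ι.app k₁ = t.ι.app s ≫ u
      rw [Category.assoc, ec.w (leg none)]
      exact hw s
    change u = ht.desc cG ≫ ec.ι.app k₁
    rw [this]
  · -- injectivity
    intro i j xi xj hij
    change t.pt ⟶ E.obj i at xi
    change t.pt ⟶ E.obj j at xj
    have hij' : xi ≫ ec.ι.app i = xj ≫ ec.ι.app j := hij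
    obtain ⟨k₀, pq, -⟩ := graph_cocone hlam hK (O := ULift.{v} Bool) (W := PEmpty.{v+1})
      (lt_of_lt_of_le (Cardinal.lt_aleph0_of_finite _) hlam)
      (lt_of_lt_of_le (Cardinal.lt_aleph0_of_finite _) hlam) PEmpty.elim PEmpty.elim
      (fun o => if o.down then i else j) (fun w => w.elim)
    set yi : t.pt ⟶ E.obj k₀ := xi ≫ E.map (pq ⟨true⟩) with hyi
    set yj : t.pt ⟶ E.obj k₀ := xj ≫ E.map (pq ⟨false⟩) with hyj
    have hy : yi ≫ ec.ι.app k₀ = yj ≫ ec.ι.app k₀ := by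
      rw [hyi, hyj]
      simp only [Category.assoc]
      rw [ec.w (pq ⟨true⟩), ec.w (pq ⟨false⟩)]
      exact hij'
    have h2 : ∀ s : S, ∃ (k' : K) (u₁ u₂ : k₀ ⟶ k'),
        (t.ι.app s ≫ yi) ≫ E.map u₁ = (t.ι.app s ≫ yj) ≫ E.map u₂ := by
      intro s
      refine coyoneda_inj (hpre s) _ _ ?_
      simp only [Category.assoc]
      rw [hy]
    choose ks u₁ u₂ hu using h2
    obtain ⟨k₁, leg, hleg⟩ := graph_cocone hlam hK (O := Option S) (W := S ⊕ S)
      (by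
        rw [Cardinal.mk_option]
        exact Cardinal.add_lt_of_lt hlam hSobj (lt_of_lt_of_le Cardinal.one_lt_aleph0 hlam))
      (by
        rw [Cardinal.mk_sum]
        simpa using Cardinal.add_lt_of_lt hlam hSobj hSobj)
      (fun _ => none) (fun w => some (Sum.elim id id w))
      (fun o => Option.rec k₀ ks o)
      (fun w => Sum.rec (fun s => u₁ s) (fun s => u₂ s) w)
    have hl1 : ∀ s : S, u₁ s ≫ leg (some s) = leg none := fun s => hleg (Sum.inl s)
    have hl2 : ∀ s : S, u₂ s ≫ leg (some s) = leg none := fun s => hleg (Sum.inr s)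
    have key : yi ≫ E.map (leg none) = yj ≫ E.map (leg none) := by
      refine ht.hom_ext (fun s => ?_)
      calc t.ι.app s ≫ yi ≫ E.map (leg none)
          = (t.ι.app s ≫ yi) ≫ E.map (u₁ s ≫ leg (some s)) := by rw [hl1]; simp
        _ = ((t.ι.app s ≫ yi) ≫ E.map (u₁ s)) ≫ E.map (leg (some s)) := by
            rw [E.map_comp]; simp
        _ = ((t.ι.app s ≫ yj) ≫ E.map (u₂ s)) ≫ E.map (leg (some s)) := by rw [hu s]
        _ = (t.ι.app s ≫ yj) ≫ E.map (u₂ s ≫ leg (some s)) := by rw [E.map_comp]; simp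
        _ = t.ι.app s ≫ yj ≫ E.map (leg none) := by rw [hl2]; simp
    refine ⟨k₁, pq ⟨true⟩ ≫ leg none, pq ⟨false⟩ ≫ leg none, ?_⟩
    change xi ≫ E.map (pq ⟨true⟩ ≫ leg none) = xj ≫ E.map (pq ⟨false⟩ ≫ leg none)
    rw [E.map_comp, E.map_comp, ← Category.assoc, ← Category.assoc]
    exact key

end Helpers


open Cardinal

section CardPack

variable {κ θ : Cardinal.{v}}

lemma two_power_pow (hθ : ℵ₀ ≤ θ) (hκθ : κ ≤ θ) (hκ : ℵ₀ ≤ κ) :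
    ((2 : Cardinal.{v}) ^ θ) ^ κ = 2 ^ θ := by
  rw [← Cardinal.power_mul]
  congr 1
  rw [Cardinal.mul_eq_max hθ hκ]
  exact max_eq_left hκθ

lemma mk_small_subsets_le (hκ : κ.IsRegular) (hθ : ℵ₀ ≤ θ) (hκθ : κ ≤ θ)
    (Z : Type v) (hZ : #Z ≤ 2 ^ θ) : #{V : Set Z // #V < κ} ≤ 2 ^ θ := by
  classical
  set β := κ.ord.ToType with hβ
  have hmkβ : #β = κ := by rw [hβ, Cardinal.mk_toType, Cardinal.card_ord]
  have hemb : ∀ V : {V : Set Z // #V < κ}, Nonempty (Option ↥V.1 ↪ β) := by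
    intro V
    rw [← Cardinal.le_def, hmkβ, Cardinal.mk_option]
    exact (Cardinal.add_lt_of_lt hκ.aleph0_le V.2
      (lt_of_lt_of_le Cardinal.one_lt_aleph0 hκ.aleph0_le)).le
  have key : ∀ V : {V : Set Z // #V < κ}, ∃ f : β → Option Z,
      V.1 = {z | some z ∈ Set.range f} := by
    intro V
    obtain ⟨e⟩ := hemb V
    haveI : Nonempty (Option ↥V.1) := ⟨none⟩
    refine ⟨fun b => (Function.invFun e b).map Subtype.val, ?_⟩
    ext z
    constructor
    · intro hz
      obtain ⟨b, hb⟩ := Function.invFun_surjective e.injective (some ⟨z, hz⟩)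
      exact ⟨b, by simp [hb]⟩
    · rintro ⟨b, hb⟩
      beta_reduce at hb
      cases hx : Function.invFun e b with
      | none => rw [hx] at hb; exact absurd hb (by simp)
      | some x =>
          rw [hx] at hb
          simp only [Option.map_some, Option.some.injEq] at hb
          rw [← hb]; exact x.2
  choose f hf using key
  have hinj : Function.Injective f := by
    intro V1 V2 h
    apply Subtype.ext
    rw [hf V1, hf V2, h]
  calc #{V : Set Z // #V < κ} ≤ #(β → Option Z) := Cardinal.mk_le_of_injective hinj
    _ = (#Z + 1) ^ κ := by
        rw [Cardinal.mk_arrow, Cardinal.mk_option, hmkβ]; simp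
    _ ≤ ((2 : Cardinal.{v}) ^ θ) ^ κ := by
        refine Cardinal.power_le_power_right ?_
        have h2 : ℵ₀ ≤ (2 : Cardinal.{v}) ^ θ :=
          le_trans hθ (Cardinal.cantor θ).le
        calc #Z + 1 ≤ 2 ^ θ + 1 := add_le_add_left hZ 1
          _ = 2 ^ θ := Cardinal.add_one_eq h2
    _ = 2 ^ θ := two_power_pow hθ hκθ hκ.aleph0_le

lemma toType_bounded (hκ : κ.IsRegular) {ι : Type v} (g : ι → κ.ord.ToType) (hι : #ι < κ) :
    ∃ b : κ.ord.ToType, ∀ i, g i < b := by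
  by_contra hne
  push_neg at hne
  have hcof : IsCofinal (Set.range g) := fun b => by
    obtain ⟨i, hi⟩ := hne b
    exact ⟨g i, ⟨i, rfl⟩, hi⟩
  have := Order.cof_le hcof
  rw [Ordinal.cof_toType, hκ.cof_ord] at this
  exact absurd (lt_of_le_of_lt Cardinal.mk_range_le hι) (not_lt.mpr this)

lemma toType_nonempty (hκ : κ.IsRegular) : Nonempty κ.ord.ToType := by
  rw [← Cardinal.mk_ne_zero_iff, Cardinal.mk_toType, Cardinal.card_ord]
  exact hκ.pos.ne'

lemma toType_succ (hκ : κ.IsRegular) (b : κ.ord.ToType) : ∃ b', b < b' := by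
  obtain ⟨b', hb'⟩ := toType_bounded hκ (fun _ : PUnit.{v + 1} => b)
    (lt_of_lt_of_le (Cardinal.lt_aleph0_of_finite _) hκ.aleph0_le)
  exact ⟨b', hb' PUnit.unit⟩

lemma union_le_two_power {ι : Type v} {Z : Type v} (f : ι → Set Z) (hθ : ℵ₀ ≤ θ)
    (hι : #ι ≤ 2 ^ θ) (hf : ∀ i, #(f i) ≤ 2 ^ θ) : #(⋃ i, f i) ≤ 2 ^ θ := by
  have h2 : ℵ₀ ≤ (2 : Cardinal.{v}) ^ θ := le_trans hθ (Cardinal.cantor θ).le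
  refine le_trans (Cardinal.mk_iUnion_le f) ?_
  calc #ι * ⨆ i, #(f i) ≤ 2 ^ θ * 2 ^ θ := by
        refine mul_le_mul' hι ?_
        exact ciSup_le' hf
    _ = 2 ^ θ := by
        rw [Cardinal.mul_eq_max h2 h2]; simp
end CardPack


open Cardinal

-- axioms standing in for earlier modules
section Closure

variable {Jc : Type v} [SmallCategory Jc]

abbrev Tri (Jc : Type v) [SmallCategory Jc] : Type v := Σ (a : Jc) (b : Jc), a ⟶ b

def idTri (a : Jc) : Tri Jc := ⟨a, a, 𝟙 a⟩

/-- The set of endpoints of a set of triples. -/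
def ends (W' : Set (Tri Jc)) : Set Jc := {a | ∃ w ∈ W', w.1 = a ∨ w.2.1 = a}

lemma src_mem_ends {W' : Set (Tri Jc)} {w : Tri Jc} (hw : w ∈ W') : w.1 ∈ ends W' :=
  ⟨w, hw, Or.inl rfl⟩

lemma tgt_mem_ends {W' : Set (Tri Jc)} {w : Tri Jc} (hw : w ∈ W') : w.2.1 ∈ ends W' :=
  ⟨w, hw, Or.inr rfl⟩

lemma mk_ends_le {W' : Set (Tri Jc)} : #(ends W') ≤ #W' + #W' := by
  have hsub : ends W' ⊆ ((fun w : Tri Jc => w.1) '' W') ∪ ((fun w : Tri Jc => w.2.1) '' W') := by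
    rintro a ⟨w, hw, (rfl | rfl)⟩
    · exact Or.inl ⟨w, hw, rfl⟩
    · exact Or.inr ⟨w, hw, rfl⟩
  refine le_trans (Cardinal.mk_le_mk_of_subset hsub) ?_
  refine le_trans (Cardinal.mk_union_le _ _) ?_
  exact add_le_add (Cardinal.mk_image_le) (Cardinal.mk_image_le)

lemma mk_ends_lt {κ : Cardinal.{v}} (hκ : κ.IsRegular) {W' : Set (Tri Jc)} (h : #W' < κ) :
    #(ends W') < κ :=
  lt_of_le_of_lt mk_ends_le (Cardinal.add_lt_of_lt hκ.aleph0_le h h)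

/-- A cocone solution for a small set of triples. -/
structure GSol (W' : Set (Tri Jc)) : Type v where
  vtx : Jc
  leg : ∀ a ∈ ends W', a ⟶ vtx
  spec : ∀ w (hw : w ∈ W'), w.2.2 ≫ leg w.2.1 (tgt_mem_ends hw) = leg w.1 (src_mem_ends hw)

lemma gsol_exists {κ : Cardinal.{v}} (hκ : κ.IsRegular) (hJ : CardFiltered κ Jc)
    (W' : Set (Tri Jc)) (h : #W' < κ) : Nonempty (GSol W') := by
  obtain ⟨vt, leg0, hleg0⟩ := graph_cocone hκ.aleph0_le hJ (O := ↥(ends W')) (W := ↥W')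
    (mk_ends_lt hκ h) h
    (fun w => ⟨w.1.1, src_mem_ends w.2⟩) (fun w => ⟨w.1.2.1, tgt_mem_ends w.2⟩)
    (fun o => o.1) (fun w => w.1.2.2)
  exact ⟨{ vtx := vt, leg := fun a ha => leg0 ⟨a, ha⟩,
           spec := fun w hw => hleg0 ⟨w, hw⟩ }⟩

variable {κ θ : Cardinal.{v}}

noncomputable def gsol (hκ : κ.IsRegular) (hJ : CardFiltered κ Jc) (W' : Set (Tri Jc))
    (h : #W' < κ) : GSol W' := (gsol_exists hκ hJ W' h).some

noncomputable def solSet (hκ : κ.IsRegular) (hJ : CardFiltered κ Jc) (W' : Set (Tri Jc))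
    (h : #W' < κ) : Set (Tri Jc) :=
  insert (idTri (gsol hκ hJ W' h).vtx)
    {t | ∃ (a : Jc) (ha : a ∈ ends W'),
      t = ⟨a, (gsol hκ hJ W' h).vtx, (gsol hκ hJ W' h).leg a ha⟩}

noncomputable def oneStep (hκ : κ.IsRegular) (hJ : CardFiltered κ Jc) (W : Set (Tri Jc)) :
    Set (Tri Jc) :=
  (W ∪ (⋃ w : ↥W, {idTri w.1.1, idTri w.1.2.1}))
    ∪ ({t | ∃ (a b c : Jc) (f : a ⟶ b) (g : b ⟶ c),
        (⟨a, b, f⟩ : Tri Jc) ∈ W ∧ (⟨b, c, g⟩ : Tri Jc) ∈ W ∧ t = ⟨a, c, f ≫ g⟩}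
      ∪ (⋃ p : {W' : Set (Tri Jc) // W' ⊆ W ∧ #W' < κ}, solSet hκ hJ p.1 p.2.2))

variable (hκ : κ.IsRegular) (hJ : CardFiltered κ Jc)

lemma subset_oneStep (W : Set (Tri Jc)) : W ⊆ oneStep hκ hJ W :=
  fun _ hw => Or.inl (Or.inl hw)

lemma ids_mem_oneStep {W : Set (Tri Jc)} {w : Tri Jc} (hw : w ∈ W) :
    idTri w.1 ∈ oneStep hκ hJ W ∧ idTri w.2.1 ∈ oneStep hκ hJ W := by
  constructor
  · exact Or.inl (Or.inr (Set.mem_iUnion.mpr ⟨⟨w, hw⟩, Or.inl rfl⟩))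
  · exact Or.inl (Or.inr (Set.mem_iUnion.mpr ⟨⟨w, hw⟩, Or.inr rfl⟩))

lemma comp_mem_oneStep {W : Set (Tri Jc)} {a b c : Jc} {f : a ⟶ b} {g : b ⟶ c}
    (hf : (⟨a, b, f⟩ : Tri Jc) ∈ W) (hg : (⟨b, c, g⟩ : Tri Jc) ∈ W) :
    (⟨a, c, f ≫ g⟩ : Tri Jc) ∈ oneStep hκ hJ W :=
  Or.inr (Or.inl ⟨a, b, c, f, g, hf, hg, rfl⟩)

lemma sol_subset_oneStep {W W' : Set (Tri Jc)} (hsub : W' ⊆ W) (h : #W' < κ) :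
    solSet hκ hJ W' h ⊆ oneStep hκ hJ W :=
  fun t ht => Or.inr (Or.inr (Set.mem_iUnion.mpr ⟨⟨W', hsub, h⟩, ht⟩))

lemma mk_pair_le {X : Type v} (a b : X) : #({a, b} : Set X) ≤ 2 := by
  refine le_trans (Cardinal.mk_insert_le) ?_
  have : #({b} : Set X) = 1 := Cardinal.mk_singleton b
  rw [this]
  norm_num

lemma mk_solSet_le (hθ : ℵ₀ ≤ θ) (hκθ : κ ≤ θ) (W' : Set (Tri Jc)) (h : #W' < κ) :
    #(solSet hκ hJ W' h) ≤ 2 ^ θ := by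
  classical
  have h2 : ℵ₀ ≤ (2 : Cardinal.{v}) ^ θ := le_trans hθ (Cardinal.cantor θ).le
  have hends : #(ends W') ≤ 2 ^ θ :=
    le_trans (mk_ends_lt hκ h).le (le_trans hκθ (Cardinal.cantor θ).le)
  refine le_trans (Cardinal.mk_insert_le) ?_
  have hlegs : #{t : Tri Jc | ∃ (a : Jc) (ha : a ∈ ends W'),
      t = ⟨a, (gsol hκ hJ W' h).vtx, (gsol hκ hJ W' h).leg a ha⟩} ≤ #(ends W') := by
    refine Cardinal.mk_le_of_injective
      (f := fun t : ↥{t : Tri Jc | ∃ (a : Jc) (ha : a ∈ ends W'),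
        t = ⟨a, (gsol hκ hJ W' h).vtx, (gsol hκ hJ W' h).leg a ha⟩} =>
        (⟨t.1.1, by obtain ⟨a, ha, ht⟩ := t.2; rw [ht]; exact ha⟩ : ↥(ends W'))) ?_
    intro t1 t2 he
    apply Subtype.ext
    obtain ⟨a1, ha1, ht1⟩ := t1.2
    obtain ⟨a2, ha2, ht2⟩ := t2.2
    have h1 : t1.1.1 = a1 := by rw [ht1]
    have h2' : t2.1.1 = a2 := by rw [ht2]
    have ha : a1 = a2 := by
      have := congrArg Subtype.val he
      simpa [h1, h2'] using this
    subst ha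
    rw [ht1, ht2]
  calc #{t : Tri Jc | ∃ (a : Jc) (ha : a ∈ ends W'),
        t = ⟨a, (gsol hκ hJ W' h).vtx, (gsol hκ hJ W' h).leg a ha⟩} + 1
      ≤ 2 ^ θ + 1 := add_le_add_left (le_trans hlegs hends) 1
    _ = 2 ^ θ := Cardinal.add_one_eq h2

lemma two_power_union {A B : Set (Tri Jc)} (hθ : ℵ₀ ≤ θ) (hA : #A ≤ 2 ^ θ)
    (hB : #B ≤ 2 ^ θ) : #(A ∪ B : Set (Tri Jc)) ≤ 2 ^ θ := by
  have h2 : ℵ₀ ≤ (2 : Cardinal.{v}) ^ θ := le_trans hθ (Cardinal.cantor θ).le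
  refine le_trans (Cardinal.mk_union_le _ _) ?_
  calc #A + #B ≤ 2 ^ θ + 2 ^ θ := add_le_add hA hB
    _ = 2 ^ θ := Cardinal.add_eq_self h2

lemma two_le_two_power (hθ : ℵ₀ ≤ θ) : (2 : Cardinal.{v}) ≤ 2 ^ θ := by
  have : (2 : Cardinal.{v}) < ℵ₀ := by exact_mod_cast Cardinal.nat_lt_aleph0 2
  exact le_trans this.le (le_trans hθ (Cardinal.cantor θ).le)

/-- Total "composition" recovery function (with junk value). -/
noncomputable def triComp (w₁ w₂ : Tri Jc) : Tri Jc := by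
  classical
  exact if h : w₁.2.1 = w₂.1 then ⟨w₁.1, w₂.2.1, w₁.2.2 ≫ eqToHom h ≫ w₂.2.2⟩ else w₁

lemma triComp_eq {a b c : Jc} (f : a ⟶ b) (g : b ⟶ c) :
    triComp (⟨a, b, f⟩ : Tri Jc) ⟨b, c, g⟩ = ⟨a, c, f ≫ g⟩ := by
  simp [triComp]

lemma mk_oneStep_le (hθ : ℵ₀ ≤ θ) (hκθ : κ ≤ θ) {W : Set (Tri Jc)} (hW : #W ≤ 2 ^ θ) :
    #(oneStep hκ hJ W) ≤ 2 ^ θ := by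
  classical
  have h2 : ℵ₀ ≤ (2 : Cardinal.{v}) ^ θ := le_trans hθ (Cardinal.cantor θ).le
  refine two_power_union hθ (two_power_union hθ hW ?_) (two_power_union hθ ?_ ?_)
  · -- identities
    refine union_le_two_power _ hθ hW (fun w => le_trans (mk_pair_le _ _) (two_le_two_power hθ))
  · -- composites
    set Cset : Set (Tri Jc) := {t | ∃ (a b c : Jc) (f : a ⟶ b) (g : b ⟶ c),
      (⟨a, b, f⟩ : Tri Jc) ∈ W ∧ (⟨b, c, g⟩ : Tri Jc) ∈ W ∧ t = ⟨a, c, f ≫ g⟩} with hCset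
    have hex : ∀ t : ↥Cset, ∃ p : ↥W × ↥W, t.1 = triComp p.1.1 p.2.1 := by
      rintro ⟨t, a, b, c, f, g, hf, hg, rfl⟩
      exact ⟨(⟨⟨a, b, f⟩, hf⟩, ⟨⟨b, c, g⟩, hg⟩), (triComp_eq f g).symm⟩
    choose Fc hFc using hex
    have hinj : Function.Injective Fc := by
      intro t1 t2 he
      apply Subtype.ext
      rw [hFc t1, hFc t2, he]
    refine le_trans (Cardinal.mk_le_of_injective hinj) ?_
    rw [Cardinal.mk_prod]
    simp only [Cardinal.lift_id]
    exact le_trans (mul_le_mul' hW hW) (le_of_eq (by rw [Cardinal.mul_eq_max h2 h2]; simp))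
  · -- solution sets
    refine union_le_two_power _ hθ ?_ (fun p => mk_solSet_le hκ hJ hθ hκθ p.1 p.2.2)
    have hidx : #{W' : Set (Tri Jc) // W' ⊆ W ∧ #W' < κ} ≤ #{V : Set ↥W // #V < κ} := by
      refine Cardinal.mk_le_of_injective
        (f := fun p : {W' : Set (Tri Jc) // W' ⊆ W ∧ #W' < κ} =>
          (⟨{x : ↥W | x.1 ∈ p.1}, by
            refine lt_of_le_of_lt ?_ p.2.2
            exact Cardinal.mk_le_of_injective (f := fun x : ↥{x : ↥W | x.1 ∈ p.1} =>
              (⟨x.1.1, x.2⟩ : ↥p.1)) (fun x y h => by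
                apply Subtype.ext; apply Subtype.ext
                have h' := congrArg Subtype.val h
                simpa using h')⟩ : {V : Set ↥W // #V < κ})) ?_
      intro p1 p2 he
      apply Subtype.ext
      have hs : {x : ↥W | x.1 ∈ p1.1} = {x : ↥W | x.1 ∈ p2.1} := by
        have := congrArg Subtype.val he
        simpa using this
      ext t
      constructor
      · intro ht
        have hmem : (⟨t, p1.2.1 ht⟩ : ↥W) ∈ {x : ↥W | x.1 ∈ p1.1} := ht
        rw [hs] at hmem
        exact hmem
      · intro ht
        have hmem : (⟨t, p2.2.1 ht⟩ : ↥W) ∈ {x : ↥W | x.1 ∈ p2.1} := ht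
        rw [← hs] at hmem
        exact hmem
    exact le_trans hidx (mk_small_subsets_le hκ hθ hκθ ↥W hW)

/-! ### Transfinite iteration -/

variable (T₀ : Set (Tri Jc))

noncomputable def stage : κ.ord.ToType → Set (Tri Jc) :=
  WellFounded.fix wellFounded_lt
    (fun b rec => oneStep hκ hJ (T₀ ∪ ⋃ x : {x : κ.ord.ToType // x < b}, rec x.1 x.2))

noncomputable def inputSet (b : κ.ord.ToType) : Set (Tri Jc) :=
  T₀ ∪ ⋃ x : {x : κ.ord.ToType // x < b}, stage hκ hJ T₀ x.1

lemma stage_spec (b : κ.ord.ToType) :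
    stage hκ hJ T₀ b = oneStep hκ hJ (inputSet hκ hJ T₀ b) :=
  WellFounded.fix_eq _ _ b

lemma inputSet_subset_stage (b : κ.ord.ToType) :
    inputSet hκ hJ T₀ b ⊆ stage hκ hJ T₀ b := by
  rw [stage_spec]
  exact subset_oneStep hκ hJ _

lemma stage_subset_inputSet {x b : κ.ord.ToType} (h : x < b) :
    stage hκ hJ T₀ x ⊆ inputSet hκ hJ T₀ b := by
  refine Set.subset_union_of_subset_right ?_ _
  exact Set.subset_iUnion (fun y : {y : κ.ord.ToType // y < b} => stage hκ hJ T₀ y.1) ⟨x, h⟩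

lemma mk_stage_le (hθ : ℵ₀ ≤ θ) (hκθ : κ ≤ θ) (hT₀ : #T₀ ≤ 2 ^ θ) (b : κ.ord.ToType) :
    #(stage hκ hJ T₀ b) ≤ 2 ^ θ := by
  refine wellFounded_lt.induction
    (C := fun b => #(stage hκ hJ T₀ b) ≤ 2 ^ θ) b ?_
  intro b ih
  · rw [stage_spec]
    refine mk_oneStep_le hκ hJ hθ hκθ ?_
    refine two_power_union hθ hT₀ ?_
    refine union_le_two_power _ hθ ?_ (fun x => ih x.1 x.2)
    calc #{x : κ.ord.ToType // x < b} ≤ #(κ.ord.ToType) := Cardinal.mk_subtype_le _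
      _ = κ := by rw [Cardinal.mk_toType, Cardinal.card_ord]
      _ ≤ 2 ^ θ := le_trans hκθ (Cardinal.cantor θ).le

noncomputable def bigW : Set (Tri Jc) := ⋃ b, stage hκ hJ T₀ b

lemma mk_bigW_le (hθ : ℵ₀ ≤ θ) (hκθ : κ ≤ θ) (hT₀ : #T₀ ≤ 2 ^ θ) :
    #(bigW hκ hJ T₀) ≤ 2 ^ θ := by
  refine union_le_two_power _ hθ ?_ (mk_stage_le hκ hJ T₀ hθ hκθ hT₀)
  calc #(κ.ord.ToType) = κ := by rw [Cardinal.mk_toType, Cardinal.card_ord]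
    _ ≤ 2 ^ θ := le_trans hκθ (Cardinal.cantor θ).le

lemma T₀_subset_bigW : T₀ ⊆ bigW hκ hJ T₀ := by
  obtain ⟨b⟩ := toType_nonempty hκ
  exact le_trans (le_trans (Set.subset_union_left)
    (inputSet_subset_stage hκ hJ T₀ b)) (Set.subset_iUnion _ b)

lemma absorb {U : Set (Tri Jc)} (hU : U ⊆ bigW hκ hJ T₀) (hcard : #U < κ) :
    ∃ b, U ⊆ inputSet hκ hJ T₀ b := by
  classical
  have h1 : ∀ u : ↥U, ∃ b, u.1 ∈ stage hκ hJ T₀ b := by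
    intro u
    exact Set.mem_iUnion.mp (hU u.2)
  choose φ hφ using h1
  obtain ⟨b, hb⟩ := toType_bounded hκ φ hcard
  refine ⟨b, fun t ht => ?_⟩
  exact stage_subset_inputSet hκ hJ T₀ (hb ⟨t, ht⟩) (hφ ⟨t, ht⟩)

lemma stage_subset_bigW (b : κ.ord.ToType) : stage hκ hJ T₀ b ⊆ bigW hκ hJ T₀ :=
  Set.subset_iUnion _ b

lemma bigW_id {w : Tri Jc} (hw : w ∈ bigW hκ hJ T₀) :
    idTri w.1 ∈ bigW hκ hJ T₀ ∧ idTri w.2.1 ∈ bigW hκ hJ T₀ := by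
  obtain ⟨b, hb⟩ := absorb hκ hJ T₀ (Set.singleton_subset_iff.mpr hw)
    (by rw [Cardinal.mk_singleton]; exact lt_of_lt_of_le Cardinal.one_lt_aleph0 hκ.aleph0_le)
  have hmem : w ∈ inputSet hκ hJ T₀ b := hb rfl
  have := ids_mem_oneStep hκ hJ hmem
  rw [← stage_spec] at this
  exact ⟨stage_subset_bigW hκ hJ T₀ b this.1, stage_subset_bigW hκ hJ T₀ b this.2⟩

lemma bigW_comp {a b c : Jc} {f : a ⟶ b} {g : b ⟶ c}
    (hf : (⟨a, b, f⟩ : Tri Jc) ∈ bigW hκ hJ T₀) (hg : (⟨b, c, g⟩ : Tri Jc) ∈ bigW hκ hJ T₀) :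
    (⟨a, c, f ≫ g⟩ : Tri Jc) ∈ bigW hκ hJ T₀ := by
  obtain ⟨b', hb'⟩ := absorb hκ hJ T₀ (U := {(⟨a, b, f⟩ : Tri Jc), ⟨b, c, g⟩})
    (by
      rintro t (rfl | rfl)
      exacts [hf, hg])
    (lt_of_le_of_lt (mk_pair_le _ _)
      (lt_of_lt_of_le (by exact_mod_cast Cardinal.nat_lt_aleph0 2) hκ.aleph0_le))
  have hmem := comp_mem_oneStep hκ hJ (hb' (Or.inl rfl)) (hb' (Or.inr rfl))
  rw [← stage_spec] at hmem
  exact stage_subset_bigW hκ hJ T₀ b' hmem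

lemma bigW_sol {W' : Set (Tri Jc)} (hsub : W' ⊆ bigW hκ hJ T₀) (h : #W' < κ) :
    solSet hκ hJ W' h ⊆ bigW hκ hJ T₀ := by
  obtain ⟨b, hb⟩ := absorb hκ hJ T₀ hsub h
  refine le_trans (sol_subset_oneStep hκ hJ hb h) ?_
  rw [← stage_spec]
  exact stage_subset_bigW hκ hJ T₀ b

/-! ### Subcategories -/

structure SubCat (Jc : Type v) [SmallCategory Jc] : Type v where
  W : Set (Tri Jc)
  idc : ∀ w ∈ W, idTri w.1 ∈ W ∧ idTri w.2.1 ∈ W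
  compc : ∀ {a b c : Jc} {f : a ⟶ b} {g : b ⟶ c},
    (⟨a, b, f⟩ : Tri Jc) ∈ W → (⟨b, c, g⟩ : Tri Jc) ∈ W → (⟨a, c, f ≫ g⟩ : Tri Jc) ∈ W

def SC (S : SubCat Jc) : Type v := {a : Jc // idTri a ∈ S.W}

instance (S : SubCat Jc) : SmallCategory (SC S) where
  Hom x y := {f : x.1 ⟶ y.1 // (⟨x.1, y.1, f⟩ : Tri Jc) ∈ S.W}
  id x := ⟨𝟙 x.1, x.2⟩
  comp f g := ⟨f.1 ≫ g.1, S.compc f.2 g.2⟩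
  id_comp f := Subtype.ext (Category.id_comp f.1)
  comp_id f := Subtype.ext (Category.comp_id f.1)
  assoc f g h := Subtype.ext (Category.assoc f.1 g.1 h.1)

lemma mk_SC_arrow_le (S : SubCat Jc) : #(Arrow (SC S)) ≤ #S.W := by
  rw [Cardinal.mk_congr (arrowEquivSigma (SC S))]
  refine Cardinal.mk_le_of_injective
    (f := fun t : Σ (x : SC S) (y : SC S), x ⟶ y =>
      (⟨⟨t.1.1, t.2.1.1, t.2.2.1⟩, t.2.2.2⟩ : ↥S.W)) ?_
  have : Function.LeftInverse
      (fun w : ↥S.W => (⟨⟨w.1.1, (S.idc w.1 w.2).1⟩, ⟨w.1.2.1, (S.idc w.1 w.2).2⟩,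
        ⟨w.1.2.2, w.2⟩⟩ : Σ (x : SC S) (y : SC S), x ⟶ y))
      (fun t : Σ (x : SC S) (y : SC S), x ⟶ y =>
        (⟨⟨t.1.1, t.2.1.1, t.2.2.1⟩, t.2.2.2⟩ : ↥S.W)) := fun t => rfl
  exact this.injective

/-- The closure theorem: every small set of triples is contained in a small
`κ`-filtered subcategory. -/
theorem closure (hκ : κ.IsRegular) (hJ : CardFiltered κ Jc) (hθ : ℵ₀ ≤ θ) (hκθ : κ ≤ θ)
    (T₀ : Set (Tri Jc)) (hT₀ : #T₀ ≤ 2 ^ θ) :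
    ∃ S : SubCat Jc, T₀ ⊆ S.W ∧ #S.W ≤ 2 ^ θ ∧ CardFiltered κ (SC S) := by
  classical
  refine ⟨⟨bigW hκ hJ T₀, fun w hw => bigW_id hκ hJ T₀ hw,
    fun {a b c f g} hf hg => bigW_comp hκ hJ T₀ hf hg⟩,
    T₀_subset_bigW hκ hJ T₀, mk_bigW_le hκ hJ T₀ hθ hκθ hT₀, ?_⟩
  set S : SubCat Jc := ⟨bigW hκ hJ T₀, fun w hw => bigW_id hκ hJ T₀ hw,
    fun {a b c f g} hf hg => bigW_comp hκ hJ T₀ hf hg⟩ with hS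
  intro A instA hA F
  set tri : Arrow A → Tri Jc := fun g =>
    ⟨(F.obj g.left).1, (F.obj g.right).1, (F.map g.hom).1⟩ with htri
  set W' : Set (Tri Jc) := Set.range tri with hW'
  have hsub : W' ⊆ bigW hκ hJ T₀ := by
    rintro t ⟨g, rfl⟩
    exact (F.map g.hom).2
  have hcard : #W' < κ := lt_of_le_of_lt Cardinal.mk_range_le hA
  set sol : GSol W' := gsol hκ hJ W' hcard with hsol
  have hsolset : solSet hκ hJ W' hcard ⊆ bigW hκ hJ T₀ := bigW_sol hκ hJ T₀ hsub hcard
  have memends : ∀ x : A, (F.obj x).1 ∈ ends W' :=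
    fun x => src_mem_ends (W' := W') (w := tri (Arrow.mk (𝟙 x))) ⟨Arrow.mk (𝟙 x), rfl⟩
  have vtxmem : idTri sol.vtx ∈ bigW hκ hJ T₀ := hsolset (Or.inl rfl)
  have legmem : ∀ x : A,
      (⟨(F.obj x).1, sol.vtx, sol.leg (F.obj x).1 (memends x)⟩ : Tri Jc) ∈ bigW hκ hJ T₀ :=
    fun x => hsolset (Or.inr ⟨(F.obj x).1, memends x, rfl⟩)
  refine ⟨⟨⟨sol.vtx, vtxmem⟩,
    ⟨fun x => ⟨sol.leg (F.obj x).1 (memends x), legmem x⟩, fun x y g => ?_⟩⟩⟩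
  apply Subtype.ext
  have hspec := sol.spec (tri (Arrow.mk g)) ⟨Arrow.mk g, rfl⟩
  show (F.map g).1 ≫ sol.leg (F.obj y).1 (memends y) = sol.leg (F.obj x).1 (memends x) ≫ 𝟙 _
  rw [Category.comp_id]
  exact hspec

end Closure


open Cardinal

section StubKeep
variable {Jc : Type v} [SmallCategory Jc]
def SCmk (S : SubCat Jc) (a : Jc) (h : idTri a ∈ S.W) : SC S := ⟨a, h⟩

def SChom (S : SubCat Jc) {a b : Jc} (ha : idTri a ∈ S.W) (hb : idTri b ∈ S.W)
    (f : a ⟶ b) (hf : (⟨a, b, f⟩ : Tri Jc) ∈ S.W) : SCmk S a ha ⟶ SCmk S b hb := ⟨f, hf⟩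
end StubKeep


section Glue

variable {Jc : Type v} [SmallCategory Jc]

instance : Preorder (SubCat Jc) where
  le S S' := S.W ⊆ S'.W
  le_refl S := Set.Subset.refl _
  le_trans S S' S'' h h' := Set.Subset.trans h h'

lemma subW {S S' : SubCat Jc} (h : S ≤ S') : S.W ⊆ S'.W := h

abbrev PCat (κ θ : Cardinal.{v}) (Jc : Type v) [SmallCategory Jc] : Type v :=
  {S : SubCat Jc // CardFiltered κ (SC S) ∧ #S.W ≤ 2 ^ θ}

variable {κ θ : Cardinal.{v}}

def upF {S S' : SubCat Jc} (h : S ≤ S') : SC S ⥤ SC S' where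
  obj a := ⟨a.1, subW h a.2⟩
  map f := ⟨f.1, subW h f.2⟩
  map_id _ := rfl
  map_comp _ _ := rfl

variable {M : Type u} [Category.{v} M] (D : Jc ⥤ M)

def DS (S : SubCat Jc) : SC S ⥤ M where
  obj a := D.obj a.1
  map f := D.map f.1
  map_id a := D.map_id a.1
  map_comp f g := D.map_comp f.1 g.1

lemma DS_up {S S' : SubCat Jc} (h : S ≤ S') : upF h ⋙ DS D S' = DS D S := rfl

variable (cc : ∀ S : PCat κ θ Jc, ColimitCocone (DS D S.1))

lemma desc_comp {S S' S'' : PCat κ θ Jc} (h : S ≤ S') (h' : S' ≤ S'') :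
    (cc S).isColimit.desc ((cc S').cocone.whisker (upF h)) ≫
      (cc S').isColimit.desc ((cc S'').cocone.whisker (upF h')) =
    (cc S).isColimit.desc ((cc S'').cocone.whisker (upF (le_trans h h'))) := by
  refine (cc S).isColimit.hom_ext (fun a => ?_)
  erw [← Category.assoc, (cc S).isColimit.fac, (cc S).isColimit.fac]
  simp only [Cocone.whisker_ι, Functor.whiskerLeft_app]
  erw [(cc S').isColimit.fac]
  rfl

/-- The glued diagram of partial colimits. -/
noncomputable def Dp : PCat κ θ Jc ⥤ M where
  obj S := (cc S).cocone.pt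
  map {S S'} h := (cc S).isColimit.desc ((cc S').cocone.whisker (upF (leOfHom h)))
  map_id S := by
    refine (cc S).isColimit.hom_ext (fun a => ?_)
    erw [(cc S).isColimit.fac]
    exact (Category.comp_id ((cc S).cocone.ι.app a)).symm
  map_comp {S S' S''} h h' := (desc_comp D cc (leOfHom h) (leOfHom h')).symm

lemma Dp_fac {S S' : PCat κ θ Jc} (h : S ⟶ S') (a : SC S.1) :
    (cc S).cocone.ι.app a ≫ (Dp D cc).map h =
      (cc S').cocone.ι.app ((upF (leOfHom h)).obj a) := by
  change (cc S).cocone.ι.app a ≫ (cc S).isColimit.desc _ = _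
  erw [(cc S).isColimit.fac]
  rfl

variable (c : Cocone D)

/-- Restriction of the ambient cocone. -/
def restCocone (S : PCat κ θ Jc) : Cocone (DS D S.1) where
  pt := c.pt
  ι :=
    { app := fun a => c.ι.app a.1
      naturality := fun a b f => by
        simp only [Functor.const_obj_obj, Functor.const_obj_map, Category.comp_id]
        exact (c.w f.1).trans (Category.comp_id _).symm }

/-- The glued cocone with the ambient colimit as point. -/
noncomputable def cP : Cocone (Dp D cc) where
  pt := c.pt
  ι :=
    { app := fun S => (cc S).isColimit.desc (restCocone D c S)
      naturality := fun S S' h => by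
        refine (cc S).isColimit.hom_ext (fun a => ?_)
        have h1 : (cc S').cocone.ι.app ((upF (leOfHom h)).obj a) ≫
            (cc S').isColimit.desc (restCocone D c S') = c.ι.app a.1 :=
          (cc S').isColimit.fac _ _
        have h2 : (cc S).cocone.ι.app a ≫ (cc S).isColimit.desc (restCocone D c S) =
            c.ι.app a.1 := (cc S).isColimit.fac _ _
        dsimp only [Functor.const_obj_map]
        erw [← Category.assoc, Dp_fac]
        exact h1.trans (h2.symm.trans
          (congrArg (fun z => (cc S).cocone.ι.app a ≫ z) (Category.comp_id _).symm)) }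

lemma cP_fac (S : PCat κ θ Jc) (a : SC S.1) :
    (cc S).cocone.ι.app a ≫ (cP D cc c).ι.app S = c.ι.app a.1 := by
  change (cc S).cocone.ι.app a ≫ (cc S).isColimit.desc _ = _
  erw [(cc S).isColimit.fac]
  rfl

variable (hc : IsColimit c)
variable (coverT : ∀ t : Tri Jc, ∃ S : PCat κ θ Jc, t ∈ S.1.W)
variable (dir : ∀ S S' : PCat κ θ Jc, ∃ S'' : PCat κ θ Jc, S ≤ S'' ∧ S' ≤ S'')

section IsColim

variable {D} {cc} {c}

lemma indep_aux (e : Cocone (Dp D cc)) {S S'' : PCat κ θ Jc} (h : S ≤ S'') (a : SC S.1) :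
    (cc S).cocone.ι.app a ≫ e.ι.app S =
      (cc S'').cocone.ι.app ((upF h).obj a) ≫ e.ι.app S'' := by
  have hw := e.w (homOfLE h)
  erw [← hw, ← Category.assoc, Dp_fac]
  rfl

lemma indep (dir : ∀ S S' : PCat κ θ Jc, ∃ S'' : PCat κ θ Jc, S ≤ S'' ∧ S' ≤ S'')
    (e : Cocone (Dp D cc)) {S S' : PCat κ θ Jc} {j : Jc}
    (hj : idTri j ∈ S.1.W) (hj' : idTri j ∈ S'.1.W) :
    (cc S).cocone.ι.app ⟨j, hj⟩ ≫ e.ι.app S =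
      (cc S').cocone.ι.app ⟨j, hj'⟩ ≫ e.ι.app S' := by
  obtain ⟨S'', h1, h2⟩ := dir S S'
  exact (indep_aux e h1 ⟨j, hj⟩).trans (indep_aux e h2 ⟨j, hj'⟩).symm

/-- The glued cocone is a colimit. -/
noncomputable def glueIsColimit (hc : IsColimit c)
    (coverT : ∀ t : Tri Jc, ∃ S : PCat κ θ Jc, t ∈ S.1.W)
    (dir : ∀ S S' : PCat κ θ Jc, ∃ S'' : PCat κ θ Jc, S ≤ S'' ∧ S' ≤ S'') :
    IsColimit (cP D cc c) := by
  classical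
  choose cov covmem using coverT
  have covobj : ∀ j : Jc, idTri j ∈ (cov (idTri j)).1.W := fun j => covmem (idTri j)
  have legnat : ∀ (e : Cocone (Dp D cc)) {j j' : Jc} (f : j ⟶ j'),
      D.map f ≫ ((cc (cov (idTri j'))).cocone.ι.app ⟨j', covobj j'⟩ ≫ e.ι.app (cov (idTri j')))
        = (cc (cov (idTri j))).cocone.ι.app ⟨j, covobj j⟩ ≫ e.ι.app (cov (idTri j)) := by
    intro e j j' f
    set Sf := cov ⟨j, j', f⟩ with hSf
    have hf : (⟨j, j', f⟩ : Tri Jc) ∈ Sf.1.W := covmem _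
    have hj : idTri j ∈ Sf.1.W := (Sf.1.idc _ hf).1
    have hj' : idTri j' ∈ Sf.1.W := (Sf.1.idc _ hf).2
    erw [indep dir e (covobj j') hj', indep dir e (covobj j) hj]
    erw [← Category.assoc]
    congr 1
    exact (cc Sf).cocone.w (SChom Sf.1 hj hj' f hf)
  refine
    { desc := fun e => hc.desc
        { pt := e.pt
          ι :=
            { app := fun j =>
                (cc (cov (idTri j))).cocone.ι.app ⟨j, covobj j⟩ ≫ e.ι.app (cov (idTri j))
              naturality := fun j j' f => by
                simp only [Functor.const_obj_obj, Functor.const_obj_map, Category.comp_id]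
                exact legnat e f } }
      fac := ?_
      uniq := ?_ }
  · intro e S
    refine (cc S).isColimit.hom_ext (fun a => ?_)
    erw [← Category.assoc, cP_fac, hc.fac]
    change (cc (cov (idTri a.1))).cocone.ι.app ⟨a.1, covobj a.1⟩ ≫ e.ι.app (cov (idTri a.1)) = _
    exact indep dir e (covobj a.1) a.2
  · intro e m hm
    refine hc.hom_ext (fun j => ?_)
    rw [hc.fac]
    have h1 : c.ι.app j =
        (cc (cov (idTri j))).cocone.ι.app ⟨j, covobj j⟩ ≫ (cP D cc c).ι.app (cov (idTri j)) :=
      (cP_fac D cc c (cov (idTri j)) ⟨j, covobj j⟩).symm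
    erw [h1, Category.assoc, hm]

end IsColim
end Glue

end St10

section
open Cardinal

/-- Let `κ` be a regular cardinal, `M`, `N` categories admitting
`κ`-filtered colimits and `(Fᵢ : M ⥤ N)` a set-indexed collection of functors preserving
`κ`-filtered colimits.  Let `B ⊆ M` be a full subcategory which is `κ`-preaccessible in `M`
and suppose that every `Fᵢ(X)` for `X ∈ B` is presentable in `N`.  Then there are
arbitrarily large regular cardinals `λ` such that for every object `X` of `B` which is
`λ`-presentable in `M`, `Fᵢ(X)` is `λ`-presentable in `N` for all `i`. -/
theorem statement10 {M : Type u} [Category.{v} M] {N : Type u₂} [Category.{v} N]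
    (κ : Cardinal.{v}) (hκ : κ.IsRegular)
    (hM : HasCardFilteredColimits κ M) (hN : HasCardFilteredColimits κ N)
    {I : Type v} (F : I → (M ⥤ N))
    (hF : ∀ i, PreservesCardFilteredColimits κ (F i))
    (B : Set M) (hB : PreaccessibleIn κ B)
    (hpres : ∀ X ∈ B, ∀ i, IsPresentableObj ((F i).obj X)) :
    ∀ ν : Cardinal.{v}, ∃ lam : Cardinal.{v}, ν ≤ lam ∧ lam.IsRegular ∧
      ∀ X ∈ B, IsCardinalPresentable lam X →
        ∀ i, IsCardinalPresentable lam ((F i).obj X) := by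
  classical
  intro ν
  obtain ⟨A, hAsmall, hAB, hApres, hAcolim⟩ := hB
  haveI : Small.{v} ↥A := hAsmall
  have hrank : ∀ q : ↥A × I, ∃ ρ : Cardinal.{v}, ρ.IsRegular ∧
      IsCardinalPresentable ρ ((F q.2).obj q.1.1) :=
    fun q => hpres q.1.1 (hAB q.1.2) q.2
  choose rk rkreg hrkpres using hrank
  set θ₁ : Cardinal.{v} := ⨆ q : Shrink ↥A × I, rk ((equivShrink ↥A).symm q.1, q.2) with hθ₁
  set θ : Cardinal.{v} := max (max κ ν) (max θ₁ ℵ₀) with hθdef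
  have hθinf : ℵ₀ ≤ θ := le_max_of_le_right (le_max_right _ _)
  have hκθ : κ ≤ θ := le_max_of_le_left (le_max_left _ _)
  have hνθ : ν ≤ θ := le_max_of_le_left (le_max_right _ _)
  have hrkθ : ∀ q : ↥A × I, rk q ≤ θ := by
    intro q
    refine le_trans ?_ (le_max_of_le_right (le_max_left _ _))
    have h := le_ciSup (Cardinal.bddAbove_range
      (fun p : Shrink ↥A × I => rk ((equivShrink ↥A).symm p.1, p.2)))
      (⟨equivShrink ↥A q.1, q.2⟩ : Shrink ↥A × I)
    simpa using h
  set lam : Cardinal.{v} := Order.succ ((2 : Cardinal.{v}) ^ θ) with hlamdef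
  have h2θ : ℵ₀ ≤ (2 : Cardinal.{v}) ^ θ := le_trans hθinf (Cardinal.cantor θ).le
  have hlamreg : lam.IsRegular := Cardinal.isRegular_succ h2θ
  have hle_lam : (2 : Cardinal.{v}) ^ θ < lam := Order.lt_succ _
  refine ⟨lam, le_trans hνθ (le_trans (Cardinal.cantor θ).le (Order.le_succ _)), hlamreg, ?_⟩
  intro X hXB hXpres i
  obtain ⟨J₀, hJfil, D, hDA, c, ⟨hc⟩, hpt⟩ := hAcolim X hXB
  subst hpt
  have cc : ∀ S : St10.PCat κ θ ↑J₀, ColimitCocone (St10.DS D S.1) := fun S => by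
    haveI := hM (St10.SC S.1) S.2.1
    exact getColimitCocone _
  have coverT : ∀ t : St10.Tri ↑J₀, ∃ S : St10.PCat κ θ ↑J₀, t ∈ S.1.W := by
    intro t
    obtain ⟨S, hsub, hsize, hfil⟩ := St10.closure hκ hJfil hθinf hκθ {t} (by
      rw [Cardinal.mk_singleton]
      exact le_trans Cardinal.one_lt_aleph0.le h2θ)
    exact ⟨⟨S, hfil, hsize⟩, hsub rfl⟩
  have dir : ∀ S S' : St10.PCat κ θ ↑J₀, ∃ S'', S ≤ S'' ∧ S' ≤ S'' := by
    intro S S'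
    obtain ⟨S'', hsub, hsize, hfil⟩ := St10.closure hκ hJfil hθinf hκθ (S.1.W ∪ S'.1.W)
      (St10.two_power_union hθinf S.2.2 S'.2.2)
    exact ⟨⟨S'', hfil, hsize⟩, fun x hx => hsub (Or.inl hx), fun x hx => hsub (Or.inr hx)⟩
  have hPfil : CardFiltered lam (St10.PCat κ θ ↑J₀) := by
    intro A' instA' hA' Fp
    have hA'le : #A' ≤ 2 ^ θ :=
      le_trans (St10.mk_obj_le_arrow A') (Order.lt_succ_iff.mp hA')
    obtain ⟨S'', hsub, hsize, hfil⟩ := St10.closure hκ hJfil hθinf hκθ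
      (⋃ a : A', (Fp.obj a).1.W)
      (St10.union_le_two_power _ hθinf hA'le (fun a => (Fp.obj a).2.2))
    refine ⟨⟨⟨S'', hfil, hsize⟩,
      ⟨fun a => homOfLE (show (Fp.obj a).1.W ⊆ S''.W from
          fun x hx => hsub (Set.mem_iUnion.mpr ⟨a, hx⟩)),
        fun a b f => Subsingleton.elim _ _⟩⟩⟩
  have hglue := St10.glueIsColimit (cc := cc) hc coverT dir
  obtain ⟨hco⟩ := hXpres (St10.PCat κ θ ↑J₀) hPfil (St10.Dp D cc) (St10.cP D cc c) hglue
  obtain ⟨S, s, hs⟩ := Limits.Types.jointly_surjective _ hco (𝟙 c.pt)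
  have hs' : s ≫ (St10.cP D cc c).ι.app S = 𝟙 c.pt := hs
  have hobj : ∀ a : St10.SC S.1, IsCardinalPresentable lam ((St10.DS D S.1 ⋙ F i).obj a) := by
    intro a
    refine St10.pres_mono ?_ (hrkpres (⟨D.obj a.1, hDA a.1⟩, i))
    exact le_trans (hrkθ _) (le_trans (Cardinal.cantor θ).le (Order.le_succ _))
  have hSsize : #(Arrow (St10.SC S.1)) < lam :=
    lt_of_le_of_lt (le_trans (St10.mk_SC_arrow_le S.1) S.2.2) hle_lam
  have ht := (hF i (St10.SC S.1) S.2.1 (St10.DS D S.1) (cc S).cocone (cc S).isColimit).some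
  have hY : IsCardinalPresentable lam ((F i).obj ((cc S).cocone.pt)) :=
    St10.pres_of_small_colimit hlamreg.aleph0_le hSsize (St10.DS D S.1 ⋙ F i)
      ((F i).mapCocone (cc S).cocone) ht hobj
  refine St10.pres_of_retract hlamreg.aleph0_le ((F i).map s)
    ((F i).map ((St10.cP D cc c).ι.app S)) ?_ hY
  exact ((F i).map_comp _ _).symm.trans ((congrArg (F i).map hs').trans ((F i).map_id _))

end

end Paper
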